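/- (Functoriality of logarithmic derivative ideals under smooth extension by variables.) Let k be a field of characteristic zero, 0 ≤ d ≤ n, R = k[x_1,…,x_n] with logarithmic derivative ideal operation D_log relative to the divisor x_1⋯x_d (generated by I, the logarithmic derivatives x_i·∂f/∂x_i for i ≤ d, and the derivatives ∂f/∂x_i for d < i ≤ n), and let S = k[x_1,…,x_n, y_1,…,y_m] carry the logarithmic derivative ideal operation relative to the same divisor x_1⋯x_d (using additionally the derivatives ∂/∂y_j). Then for every ideal I ⊆ R and every natural number a, D_{log,S}^a(I·S) = (D_{log,R}^a(I))·S. -/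

import Mathlib

open MvPolynomial

/-- The logarithmic derivative ideal with respect to a set of logarithmic variables
(specified by `islog`): the ideal generated by `I`, the logarithmic derivatives
`x_i·∂f/∂x_i` for logarithmic variables `i`, and the ordinary derivatives `∂f/∂x_i` for the
remaining variables. -/
noncomputable def logDerivIdealRel {k : Type*} [CommSemiring k] {σ : Type*} (islog : σ → Bool)
    (I : Ideal (MvPolynomial σ k)) : Ideal (MvPolynomial σ k) :=
  I ⊔ Ideal.span {g | ∃ f ∈ I, ∃ i : σ,
    g = if islog i then X i * pderiv i f else pderiv i f}

section Aux

variable {k : Type*} [CommSemiring k] {σ τ : Type*}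

lemma pderiv_rename_inl_inr (j : τ) (p : MvPolynomial σ k) :
    pderiv (Sum.inr j) (rename (Sum.inl : σ → σ ⊕ τ) p) = 0 := by
  induction p using MvPolynomial.induction_on with
  | C a => simp
  | add p q hp hq => simp [hp, hq]
  | mul_X p i hp => simp [hp, pderiv_X_of_ne (Sum.inl_ne_inr (a := i) (b := j))]

/-- The logarithmic (or ordinary) partial derivative as a derivation. -/
noncomputable def logDeriv' (islog : σ → Bool) (i : σ) :
    Derivation k (MvPolynomial σ k) (MvPolynomial σ k) :=
  if islog i then (X i : MvPolynomial σ k) • (pderiv i : Derivation k (MvPolynomial σ k) (MvPolynomial σ k))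
  else pderiv i

lemma logDeriv'_apply (islog : σ → Bool) (i : σ) (f : MvPolynomial σ k) :
    logDeriv' islog i f = if islog i then X i * pderiv i f else pderiv i f := by
  unfold logDeriv'; split <;> simp

lemma I_le_logDerivIdealRel (islog : σ → Bool) (I : Ideal (MvPolynomial σ k)) :
    I ≤ logDerivIdealRel islog I := le_sup_left

lemma logDeriv'_mem (islog : σ → Bool) (I : Ideal (MvPolynomial σ k)) (i : σ)
    {f : MvPolynomial σ k} (hf : f ∈ I) : logDeriv' islog i f ∈ logDerivIdealRel islog I := by
  refine le_sup_right (α := Ideal (MvPolynomial σ k)) ?_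
  exact Ideal.subset_span ⟨f, hf, i, logDeriv'_apply islog i f⟩

local notation "φ" => (rename (Sum.inl : σ → σ ⊕ τ) : MvPolynomial σ k →ₐ[k] MvPolynomial (σ ⊕ τ) k)

lemma key (islog : σ → Bool) (I : Ideal (MvPolynomial σ k)) (v : σ ⊕ τ)
    {x : MvPolynomial (σ ⊕ τ) k} (hx : x ∈ I.map φ) :
    logDeriv' (Sum.elim islog fun _ => false) v x ∈ (logDerivIdealRel islog I).map φ := by
  have hmap : x ∈ Ideal.span ((fun p => φ p) '' (I : Set (MvPolynomial σ k))) := hx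
  have hIle : I.map φ ≤ (logDerivIdealRel islog I).map φ :=
    Ideal.map_mono (I_le_logDerivIdealRel islog I)
  refine Submodule.span_induction
    (p := fun x _ => logDeriv' (Sum.elim islog fun _ => false) v x ∈
      (logDerivIdealRel islog I).map φ) ?_ ?_ ?_ ?_ hmap
  · rintro _ ⟨g, hg, rfl⟩
    cases v with
    | inl i =>
      have : logDeriv' (Sum.elim islog fun _ => false) (Sum.inl i : σ ⊕ τ) (φ g)
          = φ (logDeriv' islog i g) := by
        rw [logDeriv'_apply, logDeriv'_apply]
        simp only [Sum.elim_inl]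
        have hpd : pderiv (Sum.inl i : σ ⊕ τ) (φ g) = φ (pderiv i g) :=
          pderiv_rename Sum.inl_injective i g
        split <;> rename_i h <;> simp [hpd, h]
      rw [this]
      exact Ideal.mem_map_of_mem _ (logDeriv'_mem islog I i hg)
    | inr j =>
      have : logDeriv' (Sum.elim islog fun _ => false) (Sum.inr j : σ ⊕ τ) (φ g) = 0 := by
        rw [logDeriv'_apply]
        simp [pderiv_rename_inl_inr]
      rw [this]; exact Ideal.zero_mem _
  · simp
  · intro a b _ _ ha hb
    rw [map_add]; exact Ideal.add_mem _ ha hb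
  · intro a b hb hb'
    have hbmem : b ∈ I.map φ := by rwa [Ideal.map]
    rw [smul_eq_mul, Derivation.leibniz, smul_eq_mul, smul_eq_mul]
    exact Ideal.add_mem _ (Ideal.mul_mem_left _ _ hb')
      (Ideal.mul_mem_right _ _ (hIle hbmem))

lemma step (islog : σ → Bool) (I : Ideal (MvPolynomial σ k)) :
    logDerivIdealRel (Sum.elim islog fun _ : τ => false) (I.map φ)
      = (logDerivIdealRel islog I).map φ := by
  apply le_antisymm
  · rw [logDerivIdealRel]
    refine sup_le (Ideal.map_mono (I_le_logDerivIdealRel islog I)) ?_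
    rw [Ideal.span_le]
    rintro _ ⟨f, hf, v, rfl⟩
    have := key islog I v hf
    rwa [logDeriv'_apply] at this
  · rw [logDerivIdealRel, Ideal.map_sup]
    refine sup_le (le_sup_left.trans_eq rfl) ?_
    rw [Ideal.map_span, Ideal.span_le]
    rintro _ ⟨_, ⟨f, hf, i, rfl⟩, rfl⟩
    refine le_sup_right (α := Ideal (MvPolynomial (σ ⊕ τ) k)) (Ideal.subset_span ?_)
    refine ⟨φ f, Ideal.mem_map_of_mem _ hf, Sum.inl i, ?_⟩
    have hpd : pderiv (Sum.inl i : σ ⊕ τ) (φ f) = φ (pderiv i f) :=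
      pderiv_rename Sum.inl_injective i f
    simp only [Sum.elim_inl]
    split <;> rename_i h <;> simp [hpd, h]

end Aux

/-- Functoriality of logarithmic derivative ideals under the smooth extension
`R = k[x₁,…,xₙ] ↪ S = k[x₁,…,xₙ,y₁,…,y_m]`, with logarithmic structure given by the divisor
`x₁⋯x_d = 0` on both sides: `D_{log,S}ᵃ(I·S) = (D_{log,R}ᵃ(I))·S` for every `a`. -/
theorem logDerivIdeal_iterate_map_rename {k : Type*} [Field k] [CharZero k] {n m : ℕ}
    (d : ℕ) (hd : d ≤ n) (I : Ideal (MvPolynomial (Fin n) k)) (a : ℕ) :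
    (logDerivIdealRel (Sum.elim (fun i : Fin n => decide ((i : ℕ) < d))
        (fun _ : Fin m => false)))^[a]
      (Ideal.map (rename (Sum.inl : Fin n → Fin n ⊕ Fin m) :
        MvPolynomial (Fin n) k →ₐ[k] MvPolynomial (Fin n ⊕ Fin m) k) I) =
    Ideal.map (rename (Sum.inl : Fin n → Fin n ⊕ Fin m) :
        MvPolynomial (Fin n) k →ₐ[k] MvPolynomial (Fin n ⊕ Fin m) k)
      ((logDerivIdealRel (fun i : Fin n => decide ((i : ℕ) < d)))^[a] I) := by
  induction a with
  | zero => simp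
  | succ a ih =>
    rw [Function.iterate_succ_apply', Function.iterate_succ_apply', ih, step]
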